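/- For any unitary operators A₀, A₁, B₀, B₁ on a Hilbert space with A₀² = A₁² = B₀² = B₁² = I and [Aᵢ, Bⱼ] = 0 for all i,j, the identity 2√2·I − (A₀B₀ + A₀B₁ + A₁B₀ − A₁B₁) = (√2/4)(A₀ + A₁ − √2·B₀)² + (√2/4)(A₀ − A₁ − √2·B₁)² holds. -/
import Mathlib

theorem stmt_10 {H : Type*} [NormedAddCommGroup H] [InnerProductSpace ℂ H]
    [FiniteDimensional ℂ H] [CompleteSpace H]
    (A₀ A₁ B₀ B₁ : H →L[ℂ] H)
    (hA₀u : A₀ ∈ unitary (H →L[ℂ] H)) (hA₁u : A₁ ∈ unitary (H →L[ℂ] H))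
    (hB₀u : B₀ ∈ unitary (H →L[ℂ] H)) (hB₁u : B₁ ∈ unitary (H →L[ℂ] H))
    (hA₀ : A₀ * A₀ = 1) (hA₁ : A₁ * A₁ = 1) (hB₀ : B₀ * B₀ = 1) (hB₁ : B₁ * B₁ = 1)
    (h₀₀ : Commute A₀ B₀) (h₀₁ : Commute A₀ B₁) (h₁₀ : Commute A₁ B₀) (h₁₁ : Commute A₁ B₁) :
    ((2 * Real.sqrt 2 : ℝ) : ℂ) • (1 : H →L[ℂ] H) -
        (A₀ * B₀ + A₀ * B₁ + A₁ * B₀ - A₁ * B₁) =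
      ((Real.sqrt 2 / 4 : ℝ) : ℂ) • (A₀ + A₁ - ((Real.sqrt 2 : ℝ) : ℂ) • B₀) ^ 2 +
        ((Real.sqrt 2 / 4 : ℝ) : ℂ) • (A₀ - A₁ - ((Real.sqrt 2 : ℝ) : ℂ) • B₁) ^ 2 := by
  have hc2 : ((Real.sqrt 2 : ℝ) : ℂ) * ((Real.sqrt 2 : ℝ) : ℂ) = 2 := by
    rw [← Complex.ofReal_mul, Real.mul_self_sqrt (by norm_num)]; norm_num
  simp only [sq, mul_add, add_mul, sub_mul, mul_sub, smul_mul_assoc, mul_smul_comm, smul_smul]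
  rw [← h₀₀.eq, ← h₀₁.eq, ← h₁₀.eq, ← h₁₁.eq, hA₀, hA₁, hB₀, hB₁]
  match_scalars
  · push_cast; linear_combination (-((Real.sqrt 2 : ℝ) : ℂ)/2) * hc2
  · push_cast; linear_combination ((1 : ℂ)/2) * hc2
  · push_cast; linear_combination ((1 : ℂ)/2) * hc2
  · push_cast; linear_combination ((1 : ℂ)/2) * hc2
  · push_cast; linear_combination (-(1 : ℂ)/2) * hc2
  all_goals
    first
    | ring
    | linear_combination ((1 : ℂ)/2) * hc2
    | linear_combination (-(1 : ℂ)/2) * hc2
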